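/- Let a, b ∈ ℂ with b ≠ −1. Then every commutative associative bilinear multiplication · on 𝒲(a,b) satisfying the compatibility condition 2 z·[x,y] = [z·x, y] + [x, z·y] for all x, y, z is identically zero; i.e., there are no non-trivial transposed Poisson algebra structures on 𝒲(a,b) for b ≠ −1. -/

import Mathlib

/-- The underlying space of the Lie algebra `𝒲(a,b)`, with basis
`L m = single (Sum.inl m) 1` and `I n = single (Sum.inr n) 1`. -/
abbrev Wab : Type := (ℤ ⊕ ℤ) →₀ ℂ

/-- The bracket of `𝒲(a,b)` on basis elements:
`[L m, L n] = (m-n) L (m+n)`, `[L m, I n] = -(n+a+bm) I (m+n)`, `[I m, I n] = 0`. -/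
noncomputable def wabBasic (a b : ℂ) : ℤ ⊕ ℤ → ℤ ⊕ ℤ → Wab
  | Sum.inl m, Sum.inl n => (((m : ℂ) - (n : ℂ))) • Finsupp.single (Sum.inl (m + n)) (1 : ℂ)
  | Sum.inl m, Sum.inr n => (-((n : ℂ) + a + b * (m : ℂ))) • Finsupp.single (Sum.inr (m + n)) (1 : ℂ)
  | Sum.inr m, Sum.inl n => (((m : ℂ) + a + b * (n : ℂ))) • Finsupp.single (Sum.inr (m + n)) (1 : ℂ)
  | Sum.inr _, Sum.inr _ => 0

/-- The Lie bracket of `𝒲(a,b)`, extended bilinearly from basis elements. -/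
noncomputable def wabBracket (a b : ℂ) (f g : Wab) : Wab :=
  f.sum fun p c => g.sum fun q d => (c * d) • wabBasic a b p q

/-- The basis element `L m` of `𝒲(a,b)`. -/
noncomputable def Lgen (m : ℤ) : Wab := Finsupp.single (Sum.inl m) 1

/-- The basis element `I m` of `𝒲(a,b)`. -/
noncomputable def Igen (m : ℤ) : Wab := Finsupp.single (Sum.inr m) 1

lemma wabBracket_apply (a b : ℂ) (f g : Wab) (x : ℤ ⊕ ℤ) :
    wabBracket a b f g x = f.sum fun p c => g.sum fun q d => ((c * d) • wabBasic a b p q) x := by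
  rw [wabBracket, Finsupp.sum_apply]
  exact Finsupp.sum_congr fun p _ => Finsupp.sum_apply

lemma pick (f : Wab) (F : ℤ ⊕ ℤ → ℂ) (Pt : ℤ ⊕ ℤ) (A : ℂ)
    (hF : ∀ p, F p = if p = Pt then A else 0) :
    (f.sum fun p c => c * F p) = f Pt * A := by
  have : (f.sum fun p c => c * F p) = f.sum fun p c => if p = Pt then c * A else 0 := by
    apply Finsupp.sum_congr
    intro p _
    rw [hF p]
    split <;> ring
  rw [this, Finsupp.sum_ite_eq' f Pt fun p c => c * A]
  split
  · rfl
  · rw [Finsupp.notMem_support_iff.mp ‹_›, zero_mul]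

-- right basis versions
lemma brR (a b : ℂ) (u : Wab) (n : ℤ) (x : ℤ ⊕ ℤ) :
    wabBracket a b u (Lgen n) x = u.sum fun p c => c * (wabBasic a b p (Sum.inl n) x) := by
  rw [wabBracket_apply]
  exact Finsupp.sum_congr fun p _ => by
    rw [Lgen, Finsupp.sum_single_index] <;> simp

lemma brRI (a b : ℂ) (u : Wab) (n : ℤ) (x : ℤ ⊕ ℤ) :
    wabBracket a b u (Igen n) x = u.sum fun p c => c * (wabBasic a b p (Sum.inr n) x) := by
  rw [wabBracket_apply]
  exact Finsupp.sum_congr fun p _ => by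
    rw [Igen, Finsupp.sum_single_index] <;> simp

lemma brL (a b : ℂ) (u : Wab) (m : ℤ) (x : ℤ ⊕ ℤ) :
    wabBracket a b (Lgen m) u x = u.sum fun q d => d * (wabBasic a b (Sum.inl m) q x) := by
  rw [wabBracket_apply, Lgen, Finsupp.sum_single_index]
  · exact Finsupp.sum_congr fun q _ => by simp
  · simp

lemma brLI (a b : ℂ) (u : Wab) (m : ℤ) (x : ℤ ⊕ ℤ) :
    wabBracket a b (Igen m) u x = u.sum fun q d => d * (wabBasic a b (Sum.inr m) q x) := by
  rw [wabBracket_apply, Igen, Finsupp.sum_single_index]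
  · exact Finsupp.sum_congr fun q _ => by simp
  · simp

lemma R1 (a b : ℂ) (u : Wab) (n s : ℤ) :
    wabBracket a b u (Lgen n) (Sum.inl s)
      = u (Sum.inl (s - n)) * (((s - n : ℤ) : ℂ) - (n : ℂ)) := by
  rw [brR]
  apply pick
  intro p
  cases p with
  | inl k =>
    simp only [wabBasic, Finsupp.smul_apply, Finsupp.single_apply, smul_eq_mul]
    by_cases h : k = s - n
    · have h2 : k + n = s := by omega
      subst h
      simp [h2]
    · have h2 : ¬ (k + n = s) := by omega
      simp [h, h2]
  | inr k =>
    simp [wabBasic, Finsupp.single_apply]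

lemma R2 (a b : ℂ) (u : Wab) (n s : ℤ) :
    wabBracket a b u (Lgen n) (Sum.inr s)
      = u (Sum.inr (s - n)) * (((s - n : ℤ) : ℂ) + a + b * (n : ℂ)) := by
  rw [brR]
  apply pick
  intro p
  cases p with
  | inl k =>
    simp [wabBasic, Finsupp.single_apply]
  | inr k =>
    simp only [wabBasic, Finsupp.smul_apply, Finsupp.single_apply, smul_eq_mul]
    by_cases h : k = s - n
    · have h2 : k + n = s := by omega
      subst h
      simp [h2]
    · have h2 : ¬ (k + n = s) := by omega
      simp [h, h2]

lemma R3 (a b : ℂ) (u : Wab) (n s : ℤ) :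
    wabBracket a b u (Igen n) (Sum.inl s) = 0 := by
  rw [brRI]
  have : (u.sum fun p c => c * (wabBasic a b p (Sum.inr n) (Sum.inl s))) = u.sum fun p c => 0 := by
    apply Finsupp.sum_congr
    intro p _
    cases p <;> simp [wabBasic, Finsupp.single_apply]
  rw [this, Finsupp.sum, Finset.sum_const_zero]

lemma R4 (a b : ℂ) (u : Wab) (n s : ℤ) :
    wabBracket a b u (Igen n) (Sum.inr s)
      = u (Sum.inl (s - n)) * (-((n : ℂ) + a + b * ((s - n : ℤ) : ℂ))) := by
  rw [brRI]
  apply pick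
  intro p
  cases p with
  | inl k =>
    simp only [wabBasic, Finsupp.smul_apply, Finsupp.single_apply, smul_eq_mul]
    by_cases h : k = s - n
    · have h2 : k + n = s := by omega
      subst h
      simp [h2]
    · have h2 : ¬ (k + n = s) := by omega
      simp [h, h2]
  | inr k =>
    simp [wabBasic]

lemma L1 (a b : ℂ) (u : Wab) (m s : ℤ) :
    wabBracket a b (Lgen m) u (Sum.inl s)
      = u (Sum.inl (s - m)) * ((m : ℂ) - ((s - m : ℤ) : ℂ)) := by
  rw [brL]
  apply pick
  intro q
  cases q with
  | inl k =>
    simp only [wabBasic, Finsupp.smul_apply, Finsupp.single_apply, smul_eq_mul]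
    by_cases h : k = s - m
    · have h2 : m + k = s := by omega
      subst h
      simp [h2]
    · have h2 : ¬ (m + k = s) := by omega
      simp [h, h2]
  | inr k =>
    simp [wabBasic, Finsupp.single_apply]

lemma L2 (a b : ℂ) (u : Wab) (m s : ℤ) :
    wabBracket a b (Lgen m) u (Sum.inr s)
      = u (Sum.inr (s - m)) * (-(((s - m : ℤ) : ℂ) + a + b * (m : ℂ))) := by
  rw [brL]
  apply pick
  intro q
  cases q with
  | inl k =>
    simp [wabBasic, Finsupp.single_apply]
  | inr k =>
    simp only [wabBasic, Finsupp.smul_apply, Finsupp.single_apply, smul_eq_mul]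
    by_cases h : k = s - m
    · have h2 : m + k = s := by omega
      subst h
      simp [h2]
    · have h2 : ¬ (m + k = s) := by omega
      simp [h, h2]

lemma L3 (a b : ℂ) (u : Wab) (m s : ℤ) :
    wabBracket a b (Igen m) u (Sum.inl s) = 0 := by
  rw [brLI]
  have : (u.sum fun q d => d * (wabBasic a b (Sum.inr m) q (Sum.inl s))) = u.sum fun q d => 0 := by
    apply Finsupp.sum_congr
    intro q _
    cases q <;> simp [wabBasic, Finsupp.single_apply]
  rw [this, Finsupp.sum, Finset.sum_const_zero]

lemma L4 (a b : ℂ) (u : Wab) (m s : ℤ) :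
    wabBracket a b (Igen m) u (Sum.inr s)
      = u (Sum.inl (s - m)) * ((m : ℂ) + a + b * ((s - m : ℤ) : ℂ)) := by
  rw [brLI]
  apply pick
  intro q
  cases q with
  | inl k =>
    simp only [wabBasic, Finsupp.smul_apply, Finsupp.single_apply, smul_eq_mul]
    by_cases h : k = s - m
    · have h2 : m + k = s := by omega
      subst h
      simp [h2]
    · have h2 : ¬ (m + k = s) := by omega
      simp [h, h2]
  | inr k =>
    simp [wabBasic]

lemma wabBracket_LL (a b : ℂ) (m n : ℤ) :
    wabBracket a b (Lgen m) (Lgen n) = ((m : ℂ) - (n : ℂ)) • Lgen (m + n) := by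
  simp only [wabBracket, Lgen]
  rw [Finsupp.sum_single_index, Finsupp.sum_single_index]
  · simp [wabBasic, Lgen]
  · simp
  · simp [Finsupp.sum_single_index]

lemma wabBracket_LI (a b : ℂ) (m n : ℤ) :
    wabBracket a b (Lgen m) (Igen n) = (-((n : ℂ) + a + b * (m : ℂ))) • Igen (m + n) := by
  simp only [wabBracket, Lgen, Igen]
  rw [Finsupp.sum_single_index, Finsupp.sum_single_index]
  · simp [wabBasic, Igen]
  · simp
  · simp [Finsupp.sum_single_index]

lemma wabBracket_II (a b : ℂ) (m n : ℤ) :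
    wabBracket a b (Igen m) (Igen n) = 0 := by
  simp only [wabBracket, Igen]
  rw [Finsupp.sum_single_index, Finsupp.sum_single_index]
  · simp [wabBasic]
  · simp
  · simp [Finsupp.sum_single_index]

section Eqs
variable (a b : ℂ) (D : Wab →ₗ[ℂ] Wab)
variable (HD : ∀ x y : Wab, (2 : ℂ) • D (wabBracket a b x y) =
    wabBracket a b (D x) y + wabBracket a b x (D y))

include HD

lemma eqF (m n s : ℤ) :
    2*((m:ℂ) - n) * D (Lgen (m+n)) (Sum.inl s)
      = D (Lgen m) (Sum.inl (s-n)) * (((s-n:ℤ):ℂ) - (n:ℂ))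
        + D (Lgen n) (Sum.inl (s-m)) * ((m:ℂ) - ((s-m:ℤ):ℂ)) := by
  have h := HD (Lgen m) (Lgen n)
  rw [wabBracket_LL, map_smul] at h
  have h2 : ((2:ℂ) • (((m:ℂ) - (n:ℂ)) • D (Lgen (m+n)))) (Sum.inl s)
      = (wabBracket a b (D (Lgen m)) (Lgen n) + wabBracket a b (Lgen m) (D (Lgen n))) (Sum.inl s) := by
    rw [h]
  simp only [Finsupp.add_apply, Finsupp.smul_apply, smul_eq_mul] at h2
  rw [R1, L1] at h2
  linear_combination h2

lemma eqG (m n s : ℤ) :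
    2*((m:ℂ) - n) * D (Lgen (m+n)) (Sum.inr s)
      = D (Lgen m) (Sum.inr (s-n)) * (((s-n:ℤ):ℂ) + a + b*(n:ℂ))
        + D (Lgen n) (Sum.inr (s-m)) * (-(((s-m:ℤ):ℂ) + a + b*(m:ℂ))) := by
  have h := HD (Lgen m) (Lgen n)
  rw [wabBracket_LL, map_smul] at h
  have h2 : ((2:ℂ) • (((m:ℂ) - (n:ℂ)) • D (Lgen (m+n)))) (Sum.inr s)
      = (wabBracket a b (D (Lgen m)) (Lgen n) + wabBracket a b (Lgen m) (D (Lgen n))) (Sum.inr s) := by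
    rw [h]
  simp only [Finsupp.add_apply, Finsupp.smul_apply, smul_eq_mul] at h2
  rw [R2, L2] at h2
  linear_combination h2

lemma eqP (m n s : ℤ) :
    (-2)*((n:ℂ) + a + b*(m:ℂ)) * D (Igen (m+n)) (Sum.inl s)
      = D (Igen n) (Sum.inl (s-m)) * ((m:ℂ) - ((s-m:ℤ):ℂ)) := by
  have h := HD (Lgen m) (Igen n)
  rw [wabBracket_LI, map_smul] at h
  have h2 : ((2:ℂ) • ((-((n:ℂ) + a + b*(m:ℂ))) • D (Igen (m+n)))) (Sum.inl s)
      = (wabBracket a b (D (Lgen m)) (Igen n) + wabBracket a b (Lgen m) (D (Igen n))) (Sum.inl s) := by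
    rw [h]
  simp only [Finsupp.add_apply, Finsupp.smul_apply, smul_eq_mul] at h2
  rw [R3, L1] at h2
  linear_combination h2

lemma eqQ (m n s : ℤ) :
    (-2)*((n:ℂ) + a + b*(m:ℂ)) * D (Igen (m+n)) (Sum.inr s)
      = D (Lgen m) (Sum.inl (s-n)) * (-((n:ℂ) + a + b*((s-n:ℤ):ℂ)))
        + D (Igen n) (Sum.inr (s-m)) * (-(((s-m:ℤ):ℂ) + a + b*(m:ℂ))) := by
  have h := HD (Lgen m) (Igen n)
  rw [wabBracket_LI, map_smul] at h
  have h2 : ((2:ℂ) • ((-((n:ℂ) + a + b*(m:ℂ))) • D (Igen (m+n)))) (Sum.inr s)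
      = (wabBracket a b (D (Lgen m)) (Igen n) + wabBracket a b (Lgen m) (D (Igen n))) (Sum.inr s) := by
    rw [h]
  simp only [Finsupp.add_apply, Finsupp.smul_apply, smul_eq_mul] at h2
  rw [R4, L2] at h2
  linear_combination h2

lemma eqPP (m n s : ℤ) :
    0 = D (Igen m) (Sum.inl (s-n)) * (-((n:ℂ) + a + b*((s-n:ℤ):ℂ)))
        + D (Igen n) (Sum.inl (s-m)) * ((m:ℂ) + a + b*((s-m:ℤ):ℂ)) := by
  have h := HD (Igen m) (Igen n)
  rw [wabBracket_II, map_zero, smul_zero] at h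
  have h2 : (0 : Wab) (Sum.inr s)
      = (wabBracket a b (D (Igen m)) (Igen n) + wabBracket a b (Igen m) (D (Igen n))) (Sum.inr s) := by
    rw [← h]
  simp only [Finsupp.add_apply, Finsupp.coe_zero, Pi.zero_apply] at h2
  rw [R4, L4] at h2
  linear_combination h2

end Eqs

theorem classify (a b : ℂ) (hb : b ≠ -1) (f g p q : ℤ → ℤ → ℂ)
    (hF : ∀ m n s : ℤ, 2*((m:ℂ) - n) * f (m+n) s
      = f m (s-n) * (((s-n:ℤ):ℂ) - (n:ℂ)) + f n (s-m) * ((m:ℂ) - ((s-m:ℤ):ℂ)))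
    (hG : ∀ m n s : ℤ, 2*((m:ℂ) - n) * g (m+n) s
      = g m (s-n) * (((s-n:ℤ):ℂ) + a + b*(n:ℂ)) + g n (s-m) * (-(((s-m:ℤ):ℂ) + a + b*(m:ℂ))))
    (hP : ∀ m n s : ℤ, (-2)*((n:ℂ) + a + b*(m:ℂ)) * p (m+n) s
      = p n (s-m) * ((m:ℂ) - ((s-m:ℤ):ℂ)))
    (hQ : ∀ m n s : ℤ, (-2)*((n:ℂ) + a + b*(m:ℂ)) * q (m+n) s
      = f m (s-n) * (-((n:ℂ) + a + b*((s-n:ℤ):ℂ))) + q n (s-m) * (-(((s-m:ℤ):ℂ) + a + b*(m:ℂ))))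
    (hPP : ∀ m n s : ℤ, 0 = p m (s-n) * (-((n:ℂ) + a + b*((s-n:ℤ):ℂ)))
      + p n (s-m) * ((m:ℂ) + a + b*((s-m:ℤ):ℂ))) :
    (∀ m s : ℤ, p m s = 0) ∧ (∀ m s : ℤ, g m s = 0)
      ∧ (∀ m s : ℤ, f m s = if s = m then f 0 0 else 0)
      ∧ (∀ n s : ℤ, q n s = if s = n then f 0 0 else 0) := by
  have hb1 : (1:ℂ) + b ≠ 0 := fun h => hb (by linear_combination h)
  -- ## p ≡ 0
  have psupp : ∀ n s : ℤ, p n s ≠ 0 → (s:ℂ) = 2*n + 2*a := by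
    intro n s hns
    have h := hP 0 n s
    simp only [zero_add, sub_zero] at h
    push_cast at h
    have h3 : ((s:ℂ) - 2*n - 2*a) * p n s = 0 := by linear_combination h
    rcases mul_eq_zero.mp h3 with h' | h'
    · linear_combination h'
    · exact absurd h' hns
  have hp : ∀ m s : ℤ, p m s = 0 := by
    intro r w
    by_contra hc
    have hw := psupp r w hc
    have key : ∀ m' : ℤ, p m' (w + m' - r) = 0 → ((m':ℂ) + a + b*(w:ℂ)) * p r w = 0 := by
      intro m' hz
      have h := hPP m' r (w + m')
      rw [show w + m' - r = w + m' - r from rfl] at h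
      have e2 : w + m' - m' = w := by ring
      rw [e2] at h
      rw [hz] at h
      push_cast at h
      linear_combination -h
    have z1 : p (r+1) (w + (r+1) - r) = 0 := by
      by_contra hz
      have h2 := psupp _ _ hz
      have : (1:ℂ) = 2 := by push_cast at h2 hw ⊢; linear_combination h2 - hw
      norm_num at this
    have z2 : p (r+2) (w + (r+2) - r) = 0 := by
      by_contra hz
      have h2 := psupp _ _ hz
      have : (2:ℂ) = 4 := by push_cast at h2 hw ⊢; linear_combination h2 - hw
      norm_num at this
    have k1 := key (r+1) z1
    have k2 := key (r+2) z2
    push_cast at k1 k2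
    exact hc (by linear_combination k2 - k1)
  -- ## f rigidity
  have fH : ∀ m s : ℤ, s ≠ 2*m → f m s = f 0 (s - m) := by
    intro m s hs
    have h := hF m 0 s
    simp only [add_zero, sub_zero] at h
    push_cast at h
    have h2 : ((2:ℂ)*m - s) ≠ 0 := by
      have : ((2*m - s : ℤ):ℂ) ≠ 0 := Int.cast_ne_zero.mpr (by omega)
      push_cast at this
      intro hx; exact this (by linear_combination hx)
    have h3 : ((2:ℂ)*m - s) * (f m s - f 0 (s-m)) = 0 := by linear_combination h
    rcases mul_eq_zero.mp h3 with h' | h'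
    · exact absurd h' h2
    · linear_combination h'
  have fdiag : ∀ r : ℤ, f r (2*r) = f 0 r := by
    intro r
    have h := hF (6*r+3) (-5*r-3) (2*r)
    rw [show 6*r+3 + (-5*r-3) = r from by ring,
        show 2*r - (-5*r-3) = 7*r+3 from by ring,
        show 2*r - (6*r+3) = -4*r-3 from by ring,
        fH (6*r+3) (7*r+3) (by omega), fH (-5*r-3) (-4*r-3) (by omega),
        show 7*r+3 - (6*r+3) = r from by ring,
        show -4*r-3 - (-5*r-3) = r from by ring] at h
    push_cast at h
    have hne : (11*(r:ℂ)+6) ≠ 0 := by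
      have : ((11*r+6 : ℤ):ℂ) ≠ 0 := Int.cast_ne_zero.mpr (by omega)
      push_cast at this
      exact this
    have h3 : (11*(r:ℂ)+6) * (2*(f r (2*r) - f 0 r)) = 0 := by linear_combination h
    rcases mul_eq_zero.mp h3 with h' | h'
    · exact absurd h' hne
    · linear_combination h'/2
  have fall : ∀ m s : ℤ, f m s = f 0 (s - m) := by
    intro m s
    by_cases hs : s = 2*m
    · subst hs
      rw [show 2*m - m = m from by ring]
      exact fdiag m
    · exact fH m s hs
  -- ## H vanishing away from 0
  have Hk : ∀ k : ℤ, k ≠ 0 → f 0 k = 0 := by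
    intro k hk
    have hdag : ∀ n : ℤ, q n (n+k) * ((k:ℂ) - n - a) = -(f 0 k) * ((n:ℂ) + a + b*(k:ℂ)) := by
      intro n
      have h := hQ 0 n (n+k)
      rw [show (0:ℤ) + n = n from by ring, show n + k - n = k from by ring,
          show n + k - 0 = n + k from by ring] at h
      push_cast at h
      linear_combination h
    have hQ1 : ∀ m n : ℤ, 2*((n:ℂ) + a + b*(m:ℂ)) * q (m+n) (m+n+k)
        = f 0 k * ((n:ℂ) + a + b*(m:ℂ) + b*(k:ℂ)) + ((n:ℂ) + (k:ℂ) + a + b*(m:ℂ)) * q n (n+k) := by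
      intro m n
      have h := hQ m n (m+n+k)
      rw [show m+n+k-n = m+k from by ring, show m+n+k-m = n+k from by ring,
          fall m (m+k), show m+k-m = k from by ring] at h
      push_cast at h
      linear_combination -h
    have h21 := hQ1 2 1
    have h10 := hQ1 1 0
    have hd3 := hdag 3
    have hd1 := hdag 1
    have hd0 := hdag 0
    norm_num at h21 h10 hd3 hd1 hd0
    have hckb : f 0 k * ((k:ℂ) * ((1+b) * 4)) = 0 := by
      linear_combination (-(((k:ℂ)-1-a)*((k:ℂ)-3-a)))*h21 + 2*(1+a+b*2)*((k:ℂ)-1-a)*hd3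
        - (1+(k:ℂ)+a+b*2)*((k:ℂ)-3-a)*hd1
        - 2*((-(((k:ℂ)-a)*((k:ℂ)-1-a)))*h10 + 2*(a+b)*((k:ℂ)-a)*hd1 - ((k:ℂ)+a+b)*((k:ℂ)-1-a)*hd0)
    rcases mul_eq_zero.mp hckb with h' | h'
    · exact h'
    · exfalso
      rcases mul_eq_zero.mp h' with h'' | h''
      · exact Int.cast_ne_zero.mpr hk h''
      · rcases mul_eq_zero.mp h'' with h3 | h3
        · exact hb1 h3
        · norm_num at h3
  have fdelta : ∀ m s : ℤ, f m s = if s = m then f 0 0 else 0 := by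
    intro m s
    rw [fall]
    by_cases h : s = m
    · rw [if_pos h, h, sub_self]
    · rw [if_neg h, Hk (s - m) (by omega)]
  -- ## q = c0 * delta
  have hQh : ∀ m n s : ℤ, 2*((n:ℂ) + a + b*(m:ℂ)) * (q (m+n) s - if s = m+n then f 0 0 else 0)
      = (((s:ℂ) - m) + a + b*(m:ℂ)) * (q n (s-m) - if s-m = n then f 0 0 else 0) := by
    intro m n s
    have h := hQ m n s
    by_cases hs : s = m + n
    · subst hs
      rw [show m + n - n = m from by ring, show m + n - m = n from by ring] at h
      rw [fall m m, sub_self] at h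
      rw [show m + n - m = n from by ring]
      rw [if_pos rfl, if_pos rfl]
      push_cast at h ⊢
      linear_combination -h
    · have hs2 : s - m ≠ n := by omega
      rw [fall m (s-n), Hk (s-n-m) (by omega)] at h
      rw [if_neg hs, if_neg hs2]
      push_cast at h ⊢
      linear_combination -h
  have q'supp : ∀ n s : ℤ, (q n s - if s = n then f 0 0 else 0) ≠ 0 → (s:ℂ) = 2*n + a := by
    intro n s hns
    have h := hQh 0 n s
    simp only [zero_add, sub_zero] at h
    push_cast at h
    have h3 : ((s:ℂ) - 2*n - a) * (q n s - if s = n then f 0 0 else 0) = 0 := by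
      linear_combination -h
    rcases mul_eq_zero.mp h3 with h' | h'
    · linear_combination h'
    · exact absurd h' hns
  have hq' : ∀ n s : ℤ, q n s - (if s = n then f 0 0 else 0) = 0 := by
    intro r w
    by_contra hc
    have hw := q'supp r w hc
    have key : ∀ m' : ℤ, m' ≠ 0 → ((r:ℂ) - m' + a + b*(m':ℂ)) * (q r w - if w = r then f 0 0 else 0) = 0 := by
      intro m' hm'
      have h := hQh m' (r - m') w
      rw [show m' + (r - m') = r from by ring] at h
      have hz : (q (r-m') (w-m') - if w - m' = r - m' then f 0 0 else 0) = 0 := by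
        by_contra hzz
        have h2 := q'supp (r-m') (w-m') hzz
        have : (m' : ℂ) = 0 := by push_cast at h2 hw ⊢; linear_combination h2 - hw
        exact hm' (by exact_mod_cast this)
      rw [hz, mul_zero] at h
      push_cast at h ⊢
      linear_combination h/2
    have k1 := key 1 one_ne_zero
    have k2 := key 2 two_ne_zero
    push_cast at k1 k2
    have hb1' : ((1:ℂ) - b) * (q r w - if w = r then f 0 0 else 0) = 0 := by
      linear_combination k1 - k2
    have hbval : b = 1 := by
      rcases mul_eq_zero.mp hb1' with h' | h'
      · linear_combination -h'
      · exact absurd h' hc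
    have hra : ((r:ℂ) + a) * (q r w - if w = r then f 0 0 else 0) = 0 := by
      rw [hbval] at k1
      linear_combination k1
    have h := hQh 1 r (w+1)
    rw [show (1:ℤ) + r = r + 1 from by ring, show w + 1 - 1 = w from by ring] at h
    have hz : (q (r+1) (w+1) - if w + 1 = r + 1 then f 0 0 else 0) = 0 := by
      by_contra hzz
      have h2 := q'supp (r+1) (w+1) hzz
      have : (1:ℂ) = 2 := by push_cast at h2 hw ⊢; linear_combination h2 - hw
      norm_num at this
    rw [hz, mul_zero] at h
    rw [hbval] at h
    apply hc
    push_cast at h hw hra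
    linear_combination -h - 2*hra - (q r w - if w = r then f 0 0 else 0)*hw
  have hqd : ∀ n s : ℤ, q n s = if s = n then f 0 0 else 0 := by
    intro n s
    have := hq' n s
    linear_combination this
  -- ## g ≡ 0
  have hG0 : ∀ m s : ℤ, g m s * (2*(m:ℂ) - s - a) = -(((s:ℂ) - m) + a + b*(m:ℂ)) * g 0 (s-m) := by
    intro m s
    have h := hG m 0 s
    simp only [add_zero, sub_zero] at h
    push_cast at h
    linear_combination h
  have phizero : ∀ t : ℤ, g 0 t = 0 := by
    intro t
    have A1 : ∀ j : ℤ, g j (t+j) * (((t:ℂ)+a) - j) = (((t:ℂ)+a) + b*(j:ℂ)) * g 0 t := by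
      intro j
      have h := hG0 j (t+j)
      rw [show t + j - j = t from by ring] at h
      push_cast at h
      linear_combination -h
    have A2 : ∀ m n : ℤ, 2*((m:ℂ) - n) * g (m+n) (t+(m+n))
        = ((m:ℂ) + ((t:ℂ)+a) + b*(n:ℂ)) * g m (t+m) - ((n:ℂ) + ((t:ℂ)+a) + b*(m:ℂ)) * g n (t+n) := by
      intro m n
      have h := hG m n (m+n+t)
      rw [show m+n+t-n = t+m from by ring, show m+n+t-m = t+n from by ring,
          show m+n+t = t+(m+n) from by ring] at h
      push_cast at h
      linear_combination h
    have h1 := A2 1 (-1)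
    have h2 := A2 2 1
    have a1 := A1 1
    have am1 := A1 (-1)
    have a2' := A1 2
    have a3 := A1 3
    norm_num at h1 h2 a1 am1 a2' a3
    have H1 : ((2:ℂ) + b - b^2) * g 0 t = 0 := by
      linear_combination (-(1:ℂ)/2) * ((((t:ℂ)+a)^2-1)*h1)
        - (1/2)*((1+((t:ℂ)+a)-b)*(((t:ℂ)+a)+1))*a1
        + (1/2)*((-1+((t:ℂ)+a)+b)*(((t:ℂ)+a)-1))*am1
    have H2 : (6*b*(1+b) + 2*((t:ℂ)+a)*(2+b-b^2)) * g 0 t = 0 := by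
      linear_combination ((((t:ℂ)+a)-1)*(((t:ℂ)+a)-2)*(((t:ℂ)+a)-3))*h2
        - 2*((((t:ℂ)+a)-1)*(((t:ℂ)+a)-2))*a3
        + ((2+((t:ℂ)+a)+b)*(((t:ℂ)+a)-1)*(((t:ℂ)+a)-3))*a2'
        - ((1+((t:ℂ)+a)+2*b)*(((t:ℂ)+a)-2)*(((t:ℂ)+a)-3))*a1
    have H3 : b * g 0 t = 0 := by
      have h6 : ((1:ℂ)+b) * (b * g 0 t * 6) = 0 := by
        linear_combination H2 - 2*((t:ℂ)+a)*H1
      rcases mul_eq_zero.mp h6 with h' | h'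
      · exact absurd h' hb1
      · linear_combination h'/6
    linear_combination (1/2)*H1 + ((b-1)/2)*H3
  have gsupp : ∀ m s : ℤ, g m s ≠ 0 → (s:ℂ) = 2*m - a := by
    intro m s hms
    have h0 := hG0 m s
    rw [phizero (s - m), mul_zero] at h0
    rcases mul_eq_zero.mp h0 with h' | h'
    · exact absurd h' hms
    · linear_combination -h'
  have hg : ∀ m s : ℤ, g m s = 0 := by
    intro r w
    by_contra hc
    have hw := gsupp r w hc
    have h := hG (6*r+3) (-5*r-3) w
    rw [show 6*r+3 + (-5*r-3) = r from by ring] at h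
    have z1 : g (6*r+3) (w - (-5*r-3)) = 0 := by
      by_contra hz
      have h2 := gsupp _ _ hz
      have h5 : ((5*r+3 : ℤ):ℂ) = 0 := by push_cast at h2 hw ⊢; linear_combination hw - h2
      have : (5*r+3 : ℤ) = 0 := by exact_mod_cast h5
      omega
    have z2 : g (-5*r-3) (w - (6*r+3)) = 0 := by
      by_contra hz
      have h2 := gsupp _ _ hz
      have h5 : ((6*r+3 : ℤ):ℂ) = 0 := by push_cast at h2 hw ⊢; linear_combination h2 - hw
      have : (6*r+3 : ℤ) = 0 := by exact_mod_cast h5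
      omega
    rw [z1, z2] at h
    apply hc
    have h11 : (11*(r:ℂ)+6) ≠ 0 := by
      have : ((11*r+6 : ℤ):ℂ) ≠ 0 := Int.cast_ne_zero.mpr (by omega)
      push_cast at this
      exact this
    push_cast at h
    have h3 : (11*(r:ℂ)+6) * (2 * g r w) = 0 := by linear_combination h
    rcases mul_eq_zero.mp h3 with h' | h'
    · exact absurd h' h11
    · linear_combination h'/2
  exact ⟨hp, hg, fdelta, hqd⟩

/-- For `b ≠ -1` there are no non-trivial transposed Poisson
algebra structures on `𝒲(a,b)`. -/
theorem no_transposedPoisson_on_wab (a b : ℂ) (hb : b ≠ -1)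
    (m : Wab →ₗ[ℂ] Wab →ₗ[ℂ] Wab)
    (hcomm : ∀ x y : Wab, m x y = m y x)
    (hassoc : ∀ x y z : Wab, m (m x y) z = m x (m y z))
    (hcompat : ∀ x y z : Wab, (2 : ℂ) • m z (wabBracket a b x y) =
        wabBracket a b (m z x) y + wabBracket a b x (m z y)) :
    m = 0 := by
  have step : ∀ z : Wab, ∀ e : ℤ ⊕ ℤ,
      m z (Finsupp.single e 1) = (m z (Lgen 0) (Sum.inl 0)) • Finsupp.single e 1 := by
    intro z e
    have HD : ∀ x y : Wab, (2:ℂ) • (m z) (wabBracket a b x y)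
        = wabBracket a b ((m z) x) y + wabBracket a b x ((m z) y) := fun x y => hcompat x y z
    obtain ⟨hp, hg, hf, hq⟩ := classify a b hb
      (fun m' s => m z (Lgen m') (Sum.inl s)) (fun m' s => m z (Lgen m') (Sum.inr s))
      (fun m' s => m z (Igen m') (Sum.inl s)) (fun m' s => m z (Igen m') (Sum.inr s))
      (eqF a b (m z) HD) (eqG a b (m z) HD) (eqP a b (m z) HD) (eqQ a b (m z) HD)
      (eqPP a b (m z) HD)
    cases e with
    | inl i =>
      show m z (Lgen i) = _
      ext idx
      cases idx with
      | inl s_ =>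
        have h := hf i s_
        rw [Finsupp.smul_apply, smul_eq_mul, h, Finsupp.single_apply]
        by_cases hsi : s_ = i
        · subst hsi; simp
        · rw [if_neg hsi, if_neg (fun h' => hsi (by injection h' with h''; omega))]
          ring
      | inr s_ =>
        have h := hg i s_
        rw [Finsupp.smul_apply, smul_eq_mul, h]
        simp [Finsupp.single_apply]
    | inr i =>
      show m z (Igen i) = _
      ext idx
      cases idx with
      | inl s_ =>
        have h := hp i s_
        rw [Finsupp.smul_apply, smul_eq_mul, h]
        simp [Finsupp.single_apply]
      | inr s_ =>
        have h := hq i s_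
        rw [Finsupp.smul_apply, smul_eq_mul, h, Finsupp.single_apply]
        by_cases hsi : s_ = i
        · subst hsi; simp
        · rw [if_neg hsi, if_neg (fun h' => hsi (by injection h' with h''; omega))]
          ring
  have czero : ∀ e : ℤ ⊕ ℤ, m (Finsupp.single e 1) (Lgen 0) (Sum.inl 0) = 0 := by
    intro e
    set e' : ℤ ⊕ ℤ := Sum.elim (fun _ => Sum.inr 0) (fun _ => Sum.inl 0) e with he'
    have hne : e ≠ e' := by cases e <;> simp [he']
    have h1 := step (Finsupp.single e 1) e'
    have h2 := step (Finsupp.single e' 1) e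
    rw [hcomm (Finsupp.single e' 1) (Finsupp.single e 1)] at h2
    have h3 := h1.symm.trans h2
    have h4 : ((m (Finsupp.single e 1) (Lgen 0) (Sum.inl 0)) • Finsupp.single e' (1:ℂ)) e'
        = ((m (Finsupp.single e' 1) (Lgen 0) (Sum.inl 0)) • Finsupp.single e (1:ℂ)) e' := by
      rw [h3]
    rw [Finsupp.smul_apply, Finsupp.smul_apply, smul_eq_mul, smul_eq_mul,
        Finsupp.single_eq_same, Finsupp.single_eq_of_ne' hne, mul_one, mul_zero] at h4
    exact h4
  have mzero : ∀ e : ℤ ⊕ ℤ, m (Finsupp.single e 1) = 0 := by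
    intro e
    apply Finsupp.lhom_ext
    intro e'' c''
    have hs : Finsupp.single e'' c'' = c'' • Finsupp.single e'' (1:ℂ) := by
      rw [Finsupp.smul_single, smul_eq_mul, mul_one]
    rw [hs, map_smul, step, czero e, zero_smul, smul_zero, LinearMap.zero_apply]
  apply Finsupp.lhom_ext
  intro e c''
  have hs : Finsupp.single e c'' = c'' • Finsupp.single e (1:ℂ) := by
    rw [Finsupp.smul_single, smul_eq_mul, mul_one]
  rw [hs, map_smul, mzero e, smul_zero, LinearMap.zero_apply]
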